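/- Let X₀ = 0 and let X₁, ..., X_T, X_{T+1} = 0 be such that X₁, ..., X_T are independent integrable random variables with means μᵢ = E[Xᵢ] (with μ_{T+1} = 0). Define pᵢ = P(Xᵢ ≤ μ_{i+1}) for i ∈ {0, ..., T}. Then the Buy-Low-Sell-High algorithm (sell when holding and Xᵢ > μ_{i+1}; buy when not holding and Xᵢ ≤ μ_{i+1}; starting by buying at price X₀ = 0) holds the stock at the start of step i with probability exactly p_{i-1}, and its expected profit equals Σ_{i=1}^{T} E[max(μᵢ - X_{i-1}, 0)]. -/

import Mathlib

open MeasureTheory ProbabilityTheory Finset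

/-- Holding state of the Buy-Low-Sell-High algorithm: `holdBLSH μ x i` is `true`
iff the algorithm holds the stock after observing the price `x i` (the algorithm
starts by buying at price `x 0 = 0`; it sells when holding and `x i > μ (i+1)`,
and buys when not holding and `x i ≤ μ (i+1)`, so after step `i ≥ 1` it holds
iff `x i ≤ μ (i+1)`). -/
noncomputable def holdBLSH (μ : ℕ → ℝ) (x : ℕ → ℝ) : ℕ → Bool
  | 0 => true
  | i + 1 => decide (x (i + 1) ≤ μ (i + 2))

theorem buy_low_sell_high_profit {Ω : Type*} [MeasureSpace Ω]
    [IsProbabilityMeasure (ℙ : Measure Ω)]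
    (T : ℕ) (X : ℕ → Ω → ℝ) (μ : ℕ → ℝ)
    (hX0 : ∀ ω, X 0 ω = 0) (hXT1 : ∀ ω, X (T + 1) ω = 0)
    (hmeas : ∀ i, Measurable (X i))
    (hint : ∀ i, Integrable (X i))
    (hnonneg : ∀ i ω, 0 ≤ X i ω)
    (hindep : iIndepFun X ℙ)
    (hμ : ∀ i ∈ Icc 1 T, μ i = ∫ ω, X i ω)
    (hμT1 : μ (T + 1) = 0) :
    (∀ i ∈ Icc 1 T,
        ℙ {ω | holdBLSH μ (fun j => X j ω) (i - 1) = true} =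
          ℙ {ω | X (i - 1) ω ≤ μ i}) ∧
      (∫ ω, ∑ i ∈ Icc 1 T,
          (({ω' : Ω | holdBLSH μ (fun j => X j ω') (i - 1) = true ∧ μ (i + 1) < X i ω'}.indicator
              (fun ω' => X i ω') ω) -
            {ω' : Ω | holdBLSH μ (fun j => X j ω') (i - 1) = false ∧ X i ω' ≤ μ (i + 1)}.indicator
              (fun ω' => X i ω') ω)) =
        ∑ i ∈ Icc 1 T, ∫ ω, max (μ i - X (i - 1) ω) 0 := by
  -- Setup : auxiliary functions
  set W : ℕ → Ω → ℝ := fun i ω => if X i ω ≤ μ (i + 1) then X i ω else 0 with hWdef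
  set Z : ℕ → Ω → ℝ := fun i ω => if μ (i + 1) < X i ω then X i ω else 0 with hZdef
  set Y : ℕ → Ω → ℝ := fun i ω => if X i ω ≤ μ (i + 1) then (1 : ℝ) else 0 with hYdef
  have hWmeas : ∀ i, Measurable (W i) := fun i =>
    Measurable.ite (measurableSet_le (hmeas i) measurable_const) (hmeas i) measurable_const
  have hZmeas : ∀ i, Measurable (Z i) := fun i =>
    Measurable.ite (measurableSet_lt measurable_const (hmeas i)) (hmeas i) measurable_const
  have hYmeas : ∀ i, Measurable (Y i) := fun i =>
    Measurable.ite (measurableSet_le (hmeas i) measurable_const) measurable_const measurable_const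
  have hWint : ∀ i, Integrable (W i) := fun i => by
    refine (hint i).mono (hWmeas i).aestronglyMeasurable (ae_of_all _ fun ω => ?_)
    simp only [hWdef]; split_ifs <;> simp [abs_nonneg]
  have hZint : ∀ i, Integrable (Z i) := fun i => by
    refine (hint i).mono (hZmeas i).aestronglyMeasurable (ae_of_all _ fun ω => ?_)
    simp only [hZdef]; split_ifs <;> simp [abs_nonneg]
  have hYint : ∀ i, Integrable (Y i) := fun i => by
    refine (integrable_const (1 : ℝ)).mono (hYmeas i).aestronglyMeasurable
      (ae_of_all _ fun ω => ?_)
    simp only [hYdef]; split_ifs <;> simp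
  constructor
  · -- part 1
    intro i hi
    simp only [mem_Icc] at hi
    obtain ⟨k, rfl⟩ : ∃ k, i = k + 1 := ⟨i - 1, by omega⟩
    cases k with
    | zero =>
      have hμ1 : 0 ≤ μ 1 := by
        rw [hμ 1 (by simp only [mem_Icc]; omega)]
        exact integral_nonneg (fun ω => hnonneg 1 ω)
      have h1 : {ω : Ω | holdBLSH μ (fun j => X j ω) (1 - 1) = true} = Set.univ := by
        ext ω; simp [holdBLSH]
      have h2 : {ω : Ω | X (1 - 1) ω ≤ μ 1} = Set.univ := by
        ext ω; simp [hX0 ω, hμ1]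
      rw [h1, h2]
    | succ m =>
      congr 1
      ext ω
      show holdBLSH μ (fun j => X j ω) (m + 1) = true ↔ _
      simp [holdBLSH]
  · -- part 2
    rcases Nat.eq_zero_or_pos T with hT | hT
    · subst hT; simp
    have hμ1 : 0 ≤ μ 1 := by
      rw [hμ 1 (by simp only [mem_Icc]; omega)]
      exact integral_nonneg (fun ω => hnonneg 1 ω)
    -- the hold state is determined by the previous price
    have hhold : ∀ i ∈ Icc 1 T, ∀ ω : Ω,
        (holdBLSH μ (fun j => X j ω) (i - 1) = true) ↔ X (i - 1) ω ≤ μ i := by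
      intro i hi ω
      simp only [mem_Icc] at hi
      obtain ⟨k, rfl⟩ : ∃ k, i = k + 1 := ⟨i - 1, by omega⟩
      cases k with
      | zero => simp [holdBLSH, hX0 ω, hμ1]
      | succ m =>
        show holdBLSH μ (fun j => X j ω) (m + 1) = true ↔ _
        simp [holdBLSH]
    -- pointwise identity for the summands
    have hpt : ∀ i ∈ Icc 1 T, ∀ ω : Ω,
        (({ω' : Ω | holdBLSH μ (fun j => X j ω') (i - 1) = true ∧ μ (i + 1) < X i ω'}.indicator
              (fun ω' => X i ω') ω) -
            {ω' : Ω | holdBLSH μ (fun j => X j ω') (i - 1) = false ∧ X i ω' ≤ μ (i + 1)}.indicator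
              (fun ω' => X i ω') ω) =
          Y (i - 1) ω * Z i ω - (1 - Y (i - 1) ω) * W i ω := by
      intro i hi ω
      have hmem := hhold i hi ω
      have hi1 : (1 : ℕ) ≤ i := (mem_Icc.mp hi).1
      have hidx : i - 1 + 1 = i := by omega
      simp only [Set.indicator_apply, Set.mem_setOf_eq, hYdef, hZdef, hWdef, hidx]
      by_cases h1 : X (i - 1) ω ≤ μ i
      · have hb : holdBLSH μ (fun j => X j ω) (i - 1) = true := hmem.mpr h1
        by_cases h2 : μ (i + 1) < X i ω
        · simp [hb, h1, h2, not_le.mpr h2]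
        · simp [hb, h1, h2, not_lt.mp h2]
      · have hb : holdBLSH μ (fun j => X j ω) (i - 1) = false := by
          rcases Bool.eq_false_or_eq_true (holdBLSH μ (fun j => X j ω) (i - 1)) with h | h
          · exact absurd (hmem.mp h) h1
          · exact h
        by_cases h2 : X i ω ≤ μ (i + 1)
        · simp [hb, h1, h2, not_lt.mpr h2]
        · simp [hb, h1, h2, not_le.mp h2]
    -- integrability of the products
    have hYZint : ∀ i, Integrable (fun ω => Y (i - 1) ω * Z i ω) := fun i => by
      refine (hZint i).bdd_mul (c := 1) (hYmeas (i - 1)).aestronglyMeasurable (ae_of_all _ fun ω => ?_)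
      simp only [hYdef]; split_ifs <;> simp
    have hYWint : ∀ i, Integrable (fun ω => (1 - Y (i - 1) ω) * W i ω) := fun i => by
      refine (hWint i).bdd_mul (c := 1) ?_ (ae_of_all _ fun ω => ?_)
      · exact ((measurable_const.sub (hYmeas (i - 1)))).aestronglyMeasurable
      · simp only [hYdef]; split_ifs <;> simp
    -- the key independence computations
    have hYint' : ∀ i, ∫ ω, (1 - Y (i - 1) ω) = 1 - ∫ ω, Y (i - 1) ω := fun i => by
      rw [integral_sub (integrable_const 1) (hYint (i - 1)), integral_const]
      simp
    have hindYZ : ∀ i ∈ Icc 1 T, ∫ ω, Y (i - 1) ω * Z i ω =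
        (∫ ω, Y (i - 1) ω) * ∫ ω, Z i ω := by
      intro i hi
      have hij : i - 1 ≠ i := by have := (mem_Icc.mp hi).1; omega
      have hIF : IndepFun (X (i - 1)) (X i) ℙ := hindep.indepFun hij
      have hf : Measurable (fun x : ℝ => if x ≤ μ (i - 1 + 1) then (1 : ℝ) else 0) :=
        Measurable.ite (measurableSet_le measurable_id measurable_const)
          measurable_const measurable_const
      have hg : Measurable (fun x : ℝ => if μ (i + 1) < x then x else 0) :=
        Measurable.ite (measurableSet_lt measurable_const measurable_id)
          measurable_id measurable_const
      exact IndepFun.integral_fun_mul_eq_mul_integral (hIF.comp hf hg) (hYint (i - 1)).aestronglyMeasurable (hZint i).aestronglyMeasurable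
    have hindYW : ∀ i ∈ Icc 1 T, ∫ ω, (1 - Y (i - 1) ω) * W i ω =
        (∫ ω, (1 - Y (i - 1) ω)) * ∫ ω, W i ω := by
      intro i hi
      have hij : i - 1 ≠ i := by have := (mem_Icc.mp hi).1; omega
      have hIF : IndepFun (X (i - 1)) (X i) ℙ := hindep.indepFun hij
      have hf : Measurable (fun x : ℝ => 1 - (if x ≤ μ (i - 1 + 1) then (1 : ℝ) else 0)) :=
        measurable_const.sub (Measurable.ite (measurableSet_le measurable_id measurable_const)
          measurable_const measurable_const)
      have hg : Measurable (fun x : ℝ => if x ≤ μ (i + 1) then x else 0) :=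
        Measurable.ite (measurableSet_le measurable_id measurable_const)
          measurable_id measurable_const
      have h1int : Integrable (fun ω => 1 - Y (i - 1) ω) :=
        (integrable_const 1).sub (hYint (i - 1))
      exact IndepFun.integral_fun_mul_eq_mul_integral (hIF.comp hf hg) h1int.aestronglyMeasurable (hWint i).aestronglyMeasurable
    -- Z i + W i = X i, so ∫ Z i = μ i - ∫ W i
    have hZW : ∀ i ∈ Icc 1 T, ∫ ω, Z i ω = μ i - ∫ ω, W i ω := by
      intro i hi
      have : ∫ ω, (Z i ω + W i ω) = μ i := by
        rw [hμ i hi]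
        refine integral_congr_ae (ae_of_all _ fun ω => ?_)
        simp only [hZdef, hWdef]
        by_cases h : X i ω ≤ μ (i + 1)
        · simp [h, not_lt.mpr h]
        · simp [h, not_le.mp h]
      rw [integral_add (hZint i) (hWint i)] at this
      linarith
    -- the right-hand side terms
    have hRHS : ∀ i ∈ Icc 1 T, ∫ ω, max (μ i - X (i - 1) ω) 0 =
        μ i * (∫ ω, Y (i - 1) ω) - ∫ ω, W (i - 1) ω := by
      intro i hi
      have hi1 : (1 : ℕ) ≤ i := (mem_Icc.mp hi).1
      have hidx : i - 1 + 1 = i := by omega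
      have : ∀ ω, max (μ i - X (i - 1) ω) 0 = μ i * Y (i - 1) ω - W (i - 1) ω := by
        intro ω
        simp only [hYdef, hWdef, hidx]
        by_cases h : X (i - 1) ω ≤ μ i
        · rw [if_pos h, if_pos h, max_eq_left (by linarith)]; ring
        · rw [if_neg h, if_neg h, max_eq_right (by push_neg at h; linarith)]; ring
      rw [integral_congr_ae (ae_of_all _ this),
        integral_sub ((hYint (i - 1)).const_mul (μ i)) (hWint (i - 1)),
        integral_const_mul]
    -- W 0 = 0 and W T = 0
    have hW0 : ∫ ω, W 0 ω = 0 := by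
      have : ∀ ω, W 0 ω = 0 := fun ω => by
        simp only [hWdef]; rw [hX0 ω]; simp
      simp [integral_congr_ae (ae_of_all _ this)]
    have hWT : ∫ ω, W T ω = 0 := by
      have : ∀ ω, W T ω = 0 := fun ω => by
        simp only [hWdef, hμT1]
        split_ifs with h
        · linarith [hnonneg T ω]
        · rfl
      simp [integral_congr_ae (ae_of_all _ this)]
    -- put everything together
    rw [integral_congr_ae (ae_of_all _ fun ω => Finset.sum_congr rfl fun i hi => hpt i hi ω)]
    rw [integral_finset_sum (f := fun i ω => Y (i - 1) ω * Z i ω - (1 - Y (i - 1) ω) * W i ω)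
      (Icc 1 T) (fun i _ => (hYZint i).sub (hYWint i))]
    have hterm : ∀ i ∈ Icc 1 T,
        ∫ ω, (Y (i - 1) ω * Z i ω - (1 - Y (i - 1) ω) * W i ω) =
          μ i * (∫ ω, Y (i - 1) ω) - ∫ ω, W i ω := by
      intro i hi
      rw [integral_sub (hYZint i) (hYWint i), hindYZ i hi, hindYW i hi, hYint' i, hZW i hi]
      ring
    rw [Finset.sum_congr rfl hterm, Finset.sum_congr rfl hRHS]
    rw [Finset.sum_sub_distrib, Finset.sum_sub_distrib]
    congr 1
    have hIcc : Icc 1 T = Ico 1 (T + 1) := (Finset.Ico_add_one_right_eq_Icc 1 T).symm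
    rw [hIcc, Finset.sum_Ico_eq_sum_range, Finset.sum_Ico_eq_sum_range]
    simp only [Nat.add_sub_cancel]
    have h1 : ∑ i ∈ range T, ∫ ω, W (1 + i) ω = ∑ i ∈ range T, ∫ ω, W (i + 1) ω :=
      Finset.sum_congr rfl fun i _ => by rw [Nat.add_comm]
    have h2 : ∑ i ∈ range T, ∫ ω, W (1 + i - 1) ω = ∑ i ∈ range T, ∫ ω, W i ω :=
      Finset.sum_congr rfl fun i _ => by norm_num
    rw [h1, h2]
    have e1 := Finset.sum_range_succ (fun i => ∫ ω, W i ω) T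
    have e2 := Finset.sum_range_succ' (fun i => ∫ ω, W i ω) T
    rw [hW0] at e2
    rw [hWT] at e1
    linarith
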